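/- For every real number α with 0 < α < 1, the integral ∫₀^∞ α^{tanh(t/2)} e^{-t} dt is at most 2 / |log α|. -/

import Mathlib

open Real MeasureTheory Filter Topology

lemma one_sub_exp_neg_le_tanh (s : ℝ) : 1 - Real.exp (-s) ≤ Real.tanh s := by
  rw [Real.tanh_eq_sinh_div_cosh, le_div_iff₀ (Real.cosh_pos s), Real.sinh_eq, Real.cosh_eq]
  have he : Real.exp (-s) * Real.exp s = 1 := by rw [← Real.exp_add]; simp
  nlinarith [sq_nonneg (1 - Real.exp (-s)), Real.exp_pos s, Real.exp_pos (-s)]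

theorem integral_rpow_tanh_le (α : ℝ) (h0 : 0 < α) (h1 : α < 1) :
    ∫ t in Set.Ioi (0 : ℝ), α ^ (Real.tanh (t / 2)) * Real.exp (-t) ≤ 2 / |Real.log α| := by
  set L := Real.log α with hL
  have hLneg : L < 0 := Real.log_neg h0 h1
  have hLne : L ≠ 0 := ne_of_lt hLneg
  set f : ℝ → ℝ := fun t => Real.exp ((1 - Real.exp (-(t/2))) * L) * Real.exp (-(t/2)) with hf
  set F : ℝ → ℝ := fun t => (2 / L) * Real.exp ((1 - Real.exp (-(t/2))) * L) with hF
  have hderiv : ∀ t : ℝ, HasDerivAt F (f t) t := by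
    intro t
    have h1' : HasDerivAt (fun t : ℝ => -(t/2)) (-(1/2)) t := by
      simpa using ((hasDerivAt_id t).div_const 2).fun_neg
    have h2 : HasDerivAt (fun t : ℝ => Real.exp (-(t/2))) (Real.exp (-(t/2)) * -(1/2)) t :=
      h1'.exp
    have h3 : HasDerivAt (fun t : ℝ => (1 - Real.exp (-(t/2))) * L)
        ((0 - Real.exp (-(t/2)) * -(1/2)) * L) t :=
      ((hasDerivAt_const t (1:ℝ)).sub h2).mul_const L
    have h4 := (h3.exp).const_mul (2 / L)
    convert h4 using 1
    · rfl
    · rfl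
    simp only [hf]
    field_simp
    ring
  have htend : Tendsto F atTop (𝓝 ((2 / L) * Real.exp L)) := by
    have h1' : Tendsto (fun t : ℝ => -(t/2)) atTop atBot := by
      apply tendsto_neg_atBot_iff.mpr
      exact Tendsto.atTop_div_const (by norm_num) tendsto_id
    have h2 : Tendsto (fun t : ℝ => Real.exp (-(t/2))) atTop (𝓝 0) :=
      Real.tendsto_exp_atBot.comp h1'
    have h3 : Tendsto (fun t : ℝ => (1 - Real.exp (-(t/2))) * L) atTop (𝓝 ((1 - 0) * L)) :=
      ((tendsto_const_nhds.sub h2).mul_const L)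
    have h4 := (Real.continuous_exp.tendsto _).comp h3
    simpa using h4.const_mul (2 / L)
  have hfpos : ∀ t : ℝ, 0 ≤ f t := fun t =>
    le_of_lt (mul_pos (Real.exp_pos _) (Real.exp_pos _))
  have hFint : ∫ t in Set.Ioi (0:ℝ), f t = (2 / L) * Real.exp L - F 0 :=
    integral_Ioi_of_hasDerivAt_of_nonneg (hderiv 0).continuousAt.continuousWithinAt
      (fun x _ => hderiv x) (fun x _ => hfpos x) htend
  have hfint : IntegrableOn f (Set.Ioi (0:ℝ)) :=
    integrableOn_Ioi_deriv_of_nonneg (hderiv 0).continuousAt.continuousWithinAt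
      (fun x _ => hderiv x) (fun x _ => hfpos x) htend
  -- pointwise bound
  have hbound : ∀ t ∈ Set.Ioi (0:ℝ), α ^ (Real.tanh (t / 2)) * Real.exp (-t) ≤ f t := by
    intro t ht
    have ht0 : 0 < t := ht
    have hrw : α ^ (Real.tanh (t / 2)) = Real.exp (Real.tanh (t/2) * L) := by
      rw [Real.rpow_def_of_pos h0, hL]; ring_nf
    rw [hrw]
    have h5 : Real.tanh (t/2) * L ≤ (1 - Real.exp (-(t/2))) * L := by
      apply mul_le_mul_of_nonpos_right _ (le_of_lt hLneg)
      simpa using one_sub_exp_neg_le_tanh (t/2)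
    have h6 : Real.exp (-t) ≤ Real.exp (-(t/2)) := by
      apply Real.exp_le_exp.mpr; linarith
    exact mul_le_mul (Real.exp_le_exp.mpr h5) h6 (le_of_lt (Real.exp_pos _))
      (le_of_lt (Real.exp_pos _))
  -- integrability of the integrand
  have hgcont : Continuous fun t : ℝ => α ^ (Real.tanh (t / 2)) * Real.exp (-t) := by
    have : (fun t : ℝ => α ^ (Real.tanh (t / 2)) * Real.exp (-t)) =
        fun t => Real.exp (Real.tanh (t/2) * L) * Real.exp (-t) := by
      funext t
      rw [Real.rpow_def_of_pos h0, hL]; ring_nf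
    rw [this]
    have hct : Continuous Real.tanh := by
      have : Real.tanh = fun x => Real.sinh x / Real.cosh x := by
        funext x; exact Real.tanh_eq_sinh_div_cosh x
      rw [this]
      exact Real.continuous_sinh.div Real.continuous_cosh fun x => (Real.cosh_pos x).ne'
    exact (Real.continuous_exp.comp ((hct.comp (continuous_id.div_const 2)).mul
      continuous_const)).mul (Real.continuous_exp.comp continuous_neg)
  have hgint : IntegrableOn (fun t : ℝ => α ^ (Real.tanh (t / 2)) * Real.exp (-t))
      (Set.Ioi (0:ℝ)) := by
    apply MeasureTheory.Integrable.mono hfint hgcont.aestronglyMeasurable.restrict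
    filter_upwards [ae_restrict_mem measurableSet_Ioi] with t ht
    have hg0 : 0 ≤ α ^ (Real.tanh (t / 2)) * Real.exp (-t) :=
      mul_nonneg (Real.rpow_nonneg (le_of_lt h0) _) (le_of_lt (Real.exp_pos _))
    rw [Real.norm_eq_abs, Real.norm_eq_abs, abs_of_nonneg hg0, abs_of_nonneg (hfpos t)]
    exact hbound t ht
  have hmono : ∫ t in Set.Ioi (0:ℝ), α ^ (Real.tanh (t / 2)) * Real.exp (-t) ≤
      ∫ t in Set.Ioi (0:ℝ), f t :=
    setIntegral_mono_on hgint hfint measurableSet_Ioi hbound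
  have hF0 : F 0 = 2 / L := by simp [hF]
  have hexpL : Real.exp L = α := Real.exp_log h0
  have habs : |L| = -L := abs_of_neg hLneg
  calc ∫ t in Set.Ioi (0:ℝ), α ^ (Real.tanh (t / 2)) * Real.exp (-t)
      ≤ ∫ t in Set.Ioi (0:ℝ), f t := hmono
    _ = (2 / L) * α - 2 / L := by rw [hFint, hF0, hexpL]
    _ ≤ 2 / |L| := by
        rw [habs, div_mul_eq_mul_div, div_sub_div_same]
        have hnL : (0:ℝ) < -L := neg_pos.mpr hLneg
        have h2 : (2 * α - 2) / L = (2 - 2 * α) / (-L) := by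
          field_simp
          ring
        rw [h2, div_le_div_iff₀ hnL hnL]
        nlinarith
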